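/- Let n ≥ 2 and let c be a real number. Define ℱ : ℝ^{2n} → ℝ^{2n} by ℱ(x)_j = tanh(x_{j−1}) + tanh(x_{j+1}) + c, where the indices j − 1 and j + 1 are taken modulo 2n. If c > 2 + log(2 + √3), then ℱ has a globally attracting fixed point (in the sup metric on ℝ^{2n}). -/

import Mathlib

open Filter

lemma my_hasDerivAt_tanh (x : ℝ) : HasDerivAt Real.tanh (1 / Real.cosh x ^ 2) x := by
  have h := (Real.hasDerivAt_sinh x).div (Real.hasDerivAt_cosh x) (ne_of_gt (Real.cosh_pos x))
  have heq : (Real.sinh / Real.cosh) = Real.tanh := by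
    funext t; exact (Real.tanh_eq_sinh_div_cosh t).symm
  rw [heq] at h
  refine h.congr_deriv ?_
  have h1 := Real.cosh_sq_sub_sinh_sq x
  congr 1
  nlinarith [Real.cosh_pos x]

lemma my_abs_tanh_le_one (x : ℝ) : |Real.tanh x| ≤ 1 := by
  rw [Real.tanh_eq_sinh_div_cosh, abs_div, abs_of_pos (Real.cosh_pos x)]
  rw [div_le_one (Real.cosh_pos x), abs_le]
  constructor
  · have := Real.sinh_lt_cosh (-x); rw [Real.sinh_neg, Real.cosh_neg] at this; linarith
  · exact (Real.sinh_lt_cosh x).le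

lemma my_cosh_ge (t : ℝ) (ht : Real.log (2 + Real.sqrt 3) ≤ t) : 2 ≤ Real.cosh t := by
  have h3 : Real.sqrt 3 ^ 2 = 3 := Real.sq_sqrt (by norm_num)
  have h3pos : (0:ℝ) < Real.sqrt 3 := Real.sqrt_pos.2 (by norm_num)
  have hpos : (0:ℝ) < 2 + Real.sqrt 3 := by linarith
  have hm0 : 0 ≤ Real.log (2 + Real.sqrt 3) := Real.log_nonneg (by linarith)
  have hinv : (2 + Real.sqrt 3)⁻¹ = 2 - Real.sqrt 3 := by
    have hmul : (2 + Real.sqrt 3) * (2 - Real.sqrt 3) = 1 := by nlinarith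
    exact inv_eq_of_mul_eq_one_right hmul
  have hcm : Real.cosh (Real.log (2 + Real.sqrt 3)) = 2 := by
    rw [Real.cosh_log hpos, hinv]; ring
  calc (2:ℝ) = Real.cosh (Real.log (2 + Real.sqrt 3)) := hcm.symm
    _ ≤ Real.cosh t := by
        rw [Real.cosh_le_cosh, abs_of_nonneg hm0, abs_of_nonneg (le_trans hm0 ht)]; exact ht

lemma my_tanh_lip {m : ℝ} (hm : m = Real.log (2 + Real.sqrt 3)) :
    ∀ a ∈ Set.Ici m, ∀ b ∈ Set.Ici m, |Real.tanh b - Real.tanh a| ≤ 4⁻¹ * |b - a| := by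
  intro a ha b hb
  have := Convex.norm_image_sub_le_of_norm_hasDerivWithin_le
    (f := Real.tanh) (f' := fun x => 1 / Real.cosh x ^ 2) (s := Set.Ici m) (C := 4⁻¹)
    (fun x _ => (my_hasDerivAt_tanh x).hasDerivWithinAt)
    (fun x hx => by
      have h2 : 2 ≤ Real.cosh x := my_cosh_ge x (hm ▸ hx)
      rw [Real.norm_eq_abs, abs_of_pos (by positivity)]
      rw [div_le_iff₀ (by positivity)]
      nlinarith)
    (convex_Ici m) ha hb
  simpa [Real.norm_eq_abs] using this

/-- The network `ℱ(x)_j = tanh(x_{j−1}) + tanh(x_{j+1}) + c` on `ℝ^{2n}` (indices mod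
`2n`) has a globally attracting fixed point whenever `c > 2 + log(2 + √3)`, i.e.
`c > 2 + sech⁻¹(1/2)`. -/
theorem ring_tanh_network_stability
    {n : ℕ} (hn : 2 ≤ n) (c : ℝ)
    (hc : c > 2 + Real.log (2 + Real.sqrt 3)) :
    ∃ p : Fin (2 * n) → ℝ,
      (fun j => Real.tanh (p (j - ⟨1, by omega⟩)) + Real.tanh (p (j + ⟨1, by omega⟩)) + c)
        = p ∧
      ∀ x : Fin (2 * n) → ℝ,
        Tendsto
          (fun k =>
            (fun x : Fin (2 * n) → ℝ => fun j =>
              Real.tanh (x (j - ⟨1, by omega⟩)) + Real.tanh (x (j + ⟨1, by omega⟩)) + c)^[k] x)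
          atTop (nhds p) := by
  have hone : (1:ℕ) < 2 * n := by omega
  set m := Real.log (2 + Real.sqrt 3) with hm
  have hm0 : 0 ≤ m := by
    rw [hm]; exact Real.log_nonneg (by nlinarith [Real.sqrt_nonneg 3])
  have hcm : m < c - 2 := by linarith
  set F : (Fin (2*n) → ℝ) → (Fin (2*n) → ℝ) :=
    fun x j => Real.tanh (x (j - ⟨1, hone⟩)) + Real.tanh (x (j + ⟨1, hone⟩)) + c with hF
  set S : Set (Fin (2*n) → ℝ) := {x | ∀ j, m ≤ x j} with hS
  have hmem : ∀ x, F x ∈ S := by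
    intro x j
    have h1 := my_abs_tanh_le_one (x (j - ⟨1, hone⟩))
    have h2 := my_abs_tanh_le_one (x (j + ⟨1, hone⟩))
    rw [abs_le] at h1 h2
    show m ≤ Real.tanh (x (j - ⟨1, hone⟩)) + Real.tanh (x (j + ⟨1, hone⟩)) + c
    linarith [h1.1, h2.1]
  have hlip := my_tanh_lip hm
  have hdistS : ∀ x ∈ S, ∀ y ∈ S, dist (F x) (F y) ≤ 2⁻¹ * dist x y := by
    intro x hx y hy
    have hdnn : (0:ℝ) ≤ 2⁻¹ * dist x y := by positivity
    rw [dist_pi_le_iff hdnn]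
    intro j
    have e1 : dist (x (j - ⟨1, hone⟩)) (y (j - ⟨1, hone⟩)) ≤ dist x y := dist_le_pi_dist x y _
    have e2 : dist (x (j + ⟨1, hone⟩)) (y (j + ⟨1, hone⟩)) ≤ dist x y := dist_le_pi_dist x y _
    rw [Real.dist_eq] at e1 e2 ⊢
    have d1 := hlip _ (hy (j - ⟨1, hone⟩)) _ (hx (j - ⟨1, hone⟩))
    have d2 := hlip _ (hy (j + ⟨1, hone⟩)) _ (hx (j + ⟨1, hone⟩))
    have key : F x j - F y j =
        (Real.tanh (x (j - ⟨1, hone⟩)) - Real.tanh (y (j - ⟨1, hone⟩)))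
        + (Real.tanh (x (j + ⟨1, hone⟩)) - Real.tanh (y (j + ⟨1, hone⟩))) := by
      show (Real.tanh (x (j - ⟨1, hone⟩)) + Real.tanh (x (j + ⟨1, hone⟩)) + c)
          - (Real.tanh (y (j - ⟨1, hone⟩)) + Real.tanh (y (j + ⟨1, hone⟩)) + c) = _
      ring
    rw [key]
    calc |_ + _| ≤ _ + _ := abs_add_le _ _
      _ ≤ 4⁻¹ * |x (j - ⟨1, hone⟩) - y (j - ⟨1, hone⟩)|
          + 4⁻¹ * |x (j + ⟨1, hone⟩) - y (j + ⟨1, hone⟩)| := add_le_add d1 d2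
      _ ≤ 4⁻¹ * dist x y + 4⁻¹ * dist x y := by linarith
      _ = 2⁻¹ * dist x y := by ring
  have hsc : IsComplete S := by
    have hcl : IsClosed S := by
      have hSeq : S = ⋂ j, (fun x : Fin (2*n) → ℝ => x j) ⁻¹' Set.Ici m := by
        ext x; simp [hS, Set.mem_iInter]
      rw [hSeq]
      exact isClosed_iInter fun j => isClosed_Ici.preimage (continuous_apply j)
    exact hcl.isComplete
  have hsf : Set.MapsTo F S S := fun x _ => hmem x
  have hK : ContractingWith (2⁻¹ : NNReal) (hsf.restrict F S S) := by
    refine ⟨by rw [← NNReal.coe_lt_coe]; norm_num, ?_⟩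
    refine (Set.MapsTo.lipschitzOnWith_iff_restrict hsf).mp ?_
    apply LipschitzOnWith.of_dist_le_mul
    intro x hx y hy
    have := hdistS x hx y hy
    calc dist (F x) (F y) ≤ 2⁻¹ * dist x y := this
      _ = ((2⁻¹ : NNReal) : ℝ) * dist x y := by norm_num
  have hx0 : (fun _ => c - 2 : Fin (2*n) → ℝ) ∈ S := fun _ => hcm.le
  obtain ⟨p, hpS, hpfix, -, -⟩ := hK.exists_fixedPoint' hsc hsf hx0 (edist_ne_top _ _)
  have hpfix' : F p = p := hpfix
  refine ⟨p, hpfix', fun x => ?_⟩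
  obtain ⟨y, hyS, hyfix, hytend, -⟩ := hK.exists_fixedPoint' hsc hsf (hmem x) (edist_ne_top _ _)
  have hyfix' : F y = y := hyfix
  have hyp : y = p := by
    have h := hdistS y hyS p hpS
    rw [hyfix', hpfix'] at h
    have h0 : (0:ℝ) ≤ dist y p := dist_nonneg
    have : dist y p = 0 := by linarith
    exact dist_eq_zero.1 this
  rw [hyp] at hytend
  have hshift : Tendsto (fun k => F^[k+1] x) atTop (nhds p) := by
    simpa [Function.iterate_succ_apply] using hytend
  exact (tendsto_add_atTop_iff_nat 1).1 hshift
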